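/- Let A ⊂ ℝ be a set of the form A = ⋃_{i ≤ n} [a_i, b_i] ∪ ⋃_{i > n} (a_i, b_i] (indexed over i ∈ ℤ, with b_i < a_{i+1}), where all intervals have the same length and all gaps have the same length. Then (A, d) with the Euclidean metric is not plastic. -/

import Mathlib

def NonexpOn (φ : ℝ → ℝ) (A : Set ℝ) : Prop :=
  ∀ x ∈ A, ∀ y ∈ A, dist (φ x) (φ y) ≤ dist x y

def IsomOn (φ : ℝ → ℝ) (A : Set ℝ) : Prop :=
  ∀ x ∈ A, ∀ y ∈ A, dist (φ x) (φ y) = dist x y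

def Plastic (A : Set ℝ) : Prop :=
  ∀ φ : ℝ → ℝ, Set.BijOn φ A A → NonexpOn φ A → IsomOn φ A

/-- The seam map: identity below `p`, compresses `[p,q]` to `[p,(p+q)/2]`,
compresses `(q,r]` to `((p+q)/2, q]`, and shifts by `-(r-q)` above `r`. -/
noncomputable def seamMap (p q r : ℝ) (x : ℝ) : ℝ :=
  if x ≤ p then x
  else if x ≤ q then (x + p) / 2
  else if x ≤ r then (x + 2 * q - r) / 2
  else x - (r - q)

lemma seamMap_1 (p q r x : ℝ) (h : x ≤ p) : seamMap p q r x = x := by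
  unfold seamMap; rw [if_pos h]

lemma seamMap_2 (p q r x : ℝ) (h1 : p < x) (h2 : x ≤ q) :
    seamMap p q r x = (x + p) / 2 := by
  unfold seamMap; rw [if_neg (not_le.2 h1), if_pos h2]

lemma seamMap_3 (p q r x : ℝ) (hpq : p ≤ q) (h1 : q < x) (h2 : x ≤ r) :
    seamMap p q r x = (x + 2 * q - r) / 2 := by
  unfold seamMap
  rw [if_neg (not_le.2 (lt_of_le_of_lt hpq h1)), if_neg (not_le.2 h1), if_pos h2]

lemma seamMap_4 (p q r x : ℝ) (hpq : p ≤ q) (hqr : q ≤ r) (h : r < x) :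
    seamMap p q r x = x - (r - q) := by
  unfold seamMap
  rw [if_neg (not_le.2 (lt_of_le_of_lt hpq (lt_of_le_of_lt hqr h))),
      if_neg (not_le.2 (lt_of_le_of_lt hqr h)), if_neg (not_le.2 h)]

theorem mixed_closed_halfopen_not_plastic (a b : ℤ → ℝ) (n : ℤ)
    (hab : ∀ i : ℤ, a i < b i) (hba : ∀ i : ℤ, b i < a (i + 1))
    (hlen : ∀ i : ℤ, b i - a i = b (i + 1) - a (i + 1))
    (hgap : ∀ i : ℤ, a (i + 1) - b i = a i - b (i - 1)) :
    ¬ Plastic ((⋃ i : {i : ℤ // i ≤ n}, Set.Icc (a i) (b i)) ∪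
               (⋃ i : {i : ℤ // n < i}, Set.Ioc (a i) (b i))) := by
  set A : Set ℝ := (⋃ i : {i : ℤ // i ≤ n}, Set.Icc (a i) (b i)) ∪
               (⋃ i : {i : ℤ // n < i}, Set.Ioc (a i) (b i)) with hAdef
  intro hpl
  have habn := hab n
  have hban := hba n
  have habn1 := hab (n + 1)
  have hlenn := hlen n
  set Pp : ℝ := b (n + 1) - b n with hPpdef
  set φ : ℝ → ℝ := seamMap (a n) (b n) (b (n + 1)) with hφdef
  -- monotonicity of a and b
  have ha_mono : StrictMono a :=
    strictMono_int_of_lt_succ (fun i => lt_trans (hab i) (hba i))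
  have hb_mono : StrictMono b :=
    strictMono_int_of_lt_succ (fun i => lt_trans (hba i) (hab (i + 1)))
  -- constant length
  have hlen' : ∀ i : ℤ, b i - a i = b n - a n := by
    have key : ∀ i : ℤ, b i - a i = b 0 - a 0 := by
      intro i
      induction i using Int.induction_on with
      | zero => rfl
      | succ k ih => rw [← hlen (k : ℤ)]; exact ih
      | pred k ih =>
        have h := hlen (-(k : ℤ) - 1)
        have e : -(k : ℤ) - 1 + 1 = -(k : ℤ) := by ring
        rw [e] at h
        rw [h]; exact ih
    intro i; rw [key i, key n]
  -- constant gap (in step form)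
  have hgapstep : ∀ i : ℤ, a (i + 1 + 1) - b (i + 1) = a (i + 1) - b i := by
    intro i
    have h := hgap (i + 1)
    have e : i + 1 - 1 = i := by ring
    rw [e] at h
    exact h
  have hgap' : ∀ i : ℤ, a (i + 1) - b i = a (0 + 1) - b 0 := by
    intro i
    induction i using Int.induction_on with
    | zero => rfl
    | succ k ih => rw [hgapstep (k : ℤ)]; exact ih
    | pred k ih =>
      have h := hgapstep (-(k : ℤ) - 1)
      have e : -(k : ℤ) - 1 + 1 = -(k : ℤ) := by ring
      rw [e] at h ⊢
      rw [← h]; exact ih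
  have hgapc : ∀ i : ℤ, a (i + 1) - b i = a (n + 1) - b n := by
    intro i; rw [hgap' i, hgap' n]
  -- step relations
  have hstep_a : ∀ i : ℤ, a (i + 1) = a i + Pp := by
    intro i
    have h1 := hgapc i
    have h2 := hlen' i
    have h3 := hlen' (n + 1)
    rw [hPpdef]; linarith
  have hstep_b : ∀ i : ℤ, b (i + 1) = b i + Pp := by
    intro i
    have h1 := hstep_a i
    have h2 := hlen' i
    have h3 := hlen' (i + 1)
    linarith
  -- membership characterization
  have memA_iff : ∀ x : ℝ, x ∈ A ↔
      (∃ i : ℤ, i ≤ n ∧ a i ≤ x ∧ x ≤ b i) ∨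
      (∃ i : ℤ, n < i ∧ a i < x ∧ x ≤ b i) := by
    intro x
    simp only [hAdef, Set.mem_union, Set.mem_iUnion, Set.mem_Icc, Set.mem_Ioc,
      Subtype.exists, exists_prop]
  -- gap lemma: points of A above b n are above a (n+1)
  have hgapA : ∀ y ∈ A, b n < y → a (n + 1) < y := by
    intro y hy hby
    rcases (memA_iff y).1 hy with ⟨i, hi, _, h2⟩ | ⟨i, hi, h1, _⟩
    · have : b i ≤ b n := hb_mono.monotone hi
      linarith
    · have hi' : n + 1 ≤ i := by omega
      have : a (n + 1) ≤ a i := ha_mono.monotone hi'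
      linarith
  -- branch lemmas specialized
  have hφ1 : ∀ x : ℝ, x ≤ a n → φ x = x := fun x h => seamMap_1 _ _ _ _ h
  have hφ2 : ∀ x : ℝ, a n < x → x ≤ b n → φ x = (x + a n) / 2 :=
    fun x h1 h2 => seamMap_2 _ _ _ _ h1 h2
  have hφ3 : ∀ x : ℝ, b n < x → x ≤ b (n + 1) → φ x = (x + 2 * b n - b (n + 1)) / 2 :=
    fun x h1 h2 => seamMap_3 _ _ _ _ habn.le h1 h2
  have hφ4 : ∀ x : ℝ, b (n + 1) < x → φ x = x - (b (n + 1) - b n) :=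
    fun x h => seamMap_4 _ _ _ _ habn.le (by linarith) h
  -- strict monotonicity on A
  have hmono : ∀ x ∈ A, ∀ y ∈ A, x < y → φ x < φ y := by
    intro x _ y hy hxy
    rcases le_or_gt y (b n) with hyb | hyb
    · rw [hφdef]; unfold seamMap; split_ifs <;> linarith
    · have hgy : a (n + 1) < y := hgapA y hy hyb
      rw [hφdef]; unfold seamMap; split_ifs <;> linarith
  have hle : ∀ x ∈ A, ∀ y ∈ A, x ≤ y → φ x ≤ φ y := by
    intro x hx y hy h
    rcases eq_or_lt_of_le h with rfl | h'
    · exact le_refl _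
    · exact (hmono x hx y hy h').le
  -- displacement monotone on all of ℝ
  have hdisp : ∀ x y : ℝ, x ≤ y → x - φ x ≤ y - φ y := by
    intro x y h
    rw [hφdef]; unfold seamMap; split_ifs <;> linarith
  -- maps to
  have hmaps : ∀ x ∈ A, φ x ∈ A := by
    intro x hx
    rcases (memA_iff x).1 hx with ⟨i, hi, h1, h2⟩ | ⟨i, hi, h1, h2⟩
    · by_cases hin : i = n
      · rw [hin] at h1 h2
        by_cases hxa : x ≤ a n
        · rw [hφ1 x hxa]; exact hx
        · push_neg at hxa
          rw [hφ2 x hxa h2]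
          exact (memA_iff _).2 (Or.inl ⟨n, le_rfl, by linarith, by linarith⟩)
      · have hin' : i + 1 ≤ n := by omega
        have hbi : b i < a n := lt_of_lt_of_le (hba i) (ha_mono.monotone hin')
        rw [hφ1 x (by linarith)]; exact hx
    · by_cases hin : i = n + 1
      · rw [hin] at h1 h2
        have hx1 : b n < x := by linarith
        rw [hφ3 x hx1 h2]
        exact (memA_iff _).2 (Or.inl ⟨n, le_rfl, by linarith, by linarith⟩)
      · have hin2 : n + 2 ≤ i := by omega
        have ha2 : a (n + 1 + 1) = a (n + 1) + Pp := hstep_a (n + 1)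
        have e : n + 1 + 1 = n + 2 := by ring
        rw [e] at ha2
        have hai : a (n + 2) ≤ a i := ha_mono.monotone hin2
        have hxb : b (n + 1) < x := by
          have : b (n + 1) = b n + Pp := hstep_b n
          linarith
        rw [hφ4 x hxb]
        have e1 : i - 1 + 1 = i := by ring
        have hstepai : a i = a (i - 1) + Pp := by
          have := hstep_a (i - 1); rw [e1] at this; exact this
        have hstepbi : b i = b (i - 1) + Pp := by
          have := hstep_b (i - 1); rw [e1] at this; exact this
        refine (memA_iff _).2 (Or.inr ⟨i - 1, by omega, by rw [hPpdef] at *; linarith,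
          by rw [hPpdef] at *; linarith⟩)
  -- surjectivity
  have hsurj : Set.SurjOn φ A A := by
    intro y hy
    rcases (memA_iff y).1 hy with ⟨i, hi, h1, h2⟩ | ⟨i, hi, h1, h2⟩
    · by_cases hin : i = n
      · rw [hin] at h1 h2
        by_cases hyc : y ≤ (a n + b n) / 2
        · refine ⟨2 * y - a n, (memA_iff _).2 (Or.inl ⟨n, le_rfl, by linarith, by linarith⟩), ?_⟩
          by_cases hya : 2 * y - a n ≤ a n
          · rw [hφ1 _ hya]; linarith
          · push_neg at hya
            rw [hφ2 _ hya (by linarith)]; ring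
        · push_neg at hyc
          refine ⟨2 * y - 2 * b n + b (n + 1),
            (memA_iff _).2 (Or.inr ⟨n + 1, by omega, by linarith, by linarith⟩), ?_⟩
          rw [hφ3 _ (by linarith) (by linarith)]; ring
      · have hin' : i + 1 ≤ n := by omega
        have hbi : b i < a n := lt_of_lt_of_le (hba i) (ha_mono.monotone hin')
        exact ⟨y, hy, hφ1 y (by linarith)⟩
    · have hsa := hstep_a i
      have hsb := hstep_b i
      refine ⟨y + Pp, (memA_iff _).2 (Or.inr ⟨i + 1, by omega, by linarith, by linarith⟩), ?_⟩
      have hxb : b (n + 1) < y + Pp := by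
        have h3 : a (n + 1) ≤ a i := ha_mono.monotone (by omega)
        have h4 : b (n + 1) = b n + Pp := hstep_b n
        linarith
      rw [hφ4 _ hxb, hPpdef]; ring
  -- injectivity
  have hinj : Set.InjOn φ A := by
    intro x hx y hy he
    rcases lt_trichotomy x y with h | h | h
    · have := hmono x hx y hy h; linarith
    · exact h
    · have := hmono y hy x hx h; linarith
  have hbij : Set.BijOn φ A A := ⟨fun x hx => hmaps x hx, hinj, hsurj⟩
  -- nonexpansive
  have hnon : NonexpOn φ A := by
    intro x hx y hy
    rcases le_total x y with h | h
    · have h1 := hle x hx y hy h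
      have h2 := hdisp x y h
      rw [Real.dist_eq, Real.dist_eq, abs_of_nonpos (by linarith), abs_of_nonpos (by linarith)]
      linarith
    · have h1 := hle y hy x hx h
      have h2 := hdisp y x h
      rw [Real.dist_eq, Real.dist_eq, abs_of_nonneg (by linarith), abs_of_nonneg (by linarith)]
      linarith
  -- not an isometry
  have hiso := hpl φ hbij hnon
  have hAa : a n ∈ A := (memA_iff _).2 (Or.inl ⟨n, le_rfl, le_rfl, habn.le⟩)
  have hAb : b n ∈ A := (memA_iff _).2 (Or.inl ⟨n, le_rfl, habn.le, le_rfl⟩)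
  have h := hiso (a n) hAa (b n) hAb
  rw [hφ1 (a n) le_rfl, hφ2 (b n) habn le_rfl, Real.dist_eq, Real.dist_eq,
    abs_of_nonpos (by linarith), abs_of_nonpos (by linarith)] at h
  linarith
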